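/- Let U ⊆ ℝ be open, T > 0, and let ψ: [0,T] × U → ℝ be continuous and satisfy: (i) ψ(0,w) = w for all w ∈ U; (ii) ψ(t,w) ∈ U and ψ(t+s, w) = ψ(s, ψ(t,w)) for all w ∈ U and all s, t ≥ 0 with s + t ≤ T; (iii) for each t ∈ [0,T] the map w ↦ ψ(t,w) is differentiable, and (t,w) ↦ ∂ψ/∂w(t,w) is continuous on [0,T] × U. Then for every w ∈ U there exists s₀ ∈ (0,T] such that for every s ∈ (0, s₀] the number M_s := (1/s)∫₀^s ∂ψ/∂w(r,w) dr is nonzero, the limit lim_{t↓0} (ψ(t,w) − w)/t exists in ℝ, and it equals ((ψ(s,w) − w)/s)·M_s^{−1}. -/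

import Mathlib

open Set Filter MeasureTheory intervalIntegral Topology

/-- Montgomery–Zippin argument in the proof of Theorem 2.1: for a
continuous local flow `ψ` on an open set `U ⊆ ℝ` with `ψ(0,w) = w`, the semigroup
property, and continuously differentiable dependence `∂ψ/∂w` on the state, the
time derivative of `ψ` at `t = 0` exists and equals
`((ψ(s,w) − w)/s)·M_s⁻¹` with `M_s = (1/s)∫₀^s ∂ψ/∂w(r,w) dr`. -/
theorem flow_time_differentiable_at_zero (U : Set ℝ) (hU : IsOpen U)
    (T : ℝ) (hT : 0 < T) (ψ ψw : ℝ → ℝ → ℝ)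
    (hcont : ContinuousOn (fun p : ℝ × ℝ => ψ p.1 p.2) (Icc 0 T ×ˢ U))
    (hid : ∀ w ∈ U, ψ 0 w = w)
    (hmem : ∀ w ∈ U, ∀ t ∈ Icc (0 : ℝ) T, ψ t w ∈ U)
    (hflow : ∀ w ∈ U, ∀ s t : ℝ, 0 ≤ s → 0 ≤ t → s + t ≤ T →
      ψ (t + s) w = ψ s (ψ t w))
    (hdiff : ∀ t ∈ Icc (0 : ℝ) T, ∀ w ∈ U, HasDerivAt (ψ t) (ψw t w) w)
    (hwcont : ContinuousOn (fun p : ℝ × ℝ => ψw p.1 p.2) (Icc 0 T ×ˢ U)) :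
    ∀ w ∈ U, ∃ s₀ : ℝ, 0 < s₀ ∧ s₀ ≤ T ∧
      ∀ s : ℝ, 0 < s → s ≤ s₀ →
        (1 / s) * (∫ r in (0 : ℝ)..s, ψw r w) ≠ 0 ∧
        Tendsto (fun t : ℝ => (ψ t w - w) / t) (𝓝[>] (0 : ℝ))
          (𝓝 (((ψ s w - w) / s) * ((1 / s) * ∫ r in (0 : ℝ)..s, ψw r w)⁻¹)) := by
  intro w hw
  -- ψw 0 w = 1
  have h0T : (0:ℝ) ∈ Icc (0:ℝ) T := ⟨le_refl 0, hT.le⟩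
  have hψw0 : ψw 0 w = 1 := by
    have h1 : HasDerivAt (ψ 0) (ψw 0 w) w := hdiff 0 h0T w hw
    have h2 : HasDerivAt (fun x : ℝ => x) (ψw 0 w) w := by
      refine h1.congr_of_eventuallyEq ?_
      filter_upwards [hU.mem_nhds hw] with x hx using (hid x hx).symm
    exact h2.unique (hasDerivAt_id w)
  -- lower bound on ψw near (0, w)
  have hcw : ContinuousWithinAt (fun p : ℝ × ℝ => ψw p.1 p.2) (Icc 0 T ×ˢ U) (0, w) :=
    hwcont (0, w) ⟨h0T, hw⟩
  have hev : ∀ᶠ p : ℝ × ℝ in 𝓝[Icc 0 T ×ˢ U] (0, w), 1/2 < ψw p.1 p.2 := by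
    refine hcw (Ioi_mem_nhds ?_)
    simp only [hψw0]; norm_num
  rw [eventually_nhdsWithin_iff, Metric.eventually_nhds_iff] at hev
  obtain ⟨δ, hδpos, hδ⟩ := hev
  -- choose s₀
  refine ⟨min (δ/2) (T/2), lt_min (by linarith) (by linarith), (min_le_right _ _).trans (by linarith), ?_⟩
  intro s hs0 hss
  have hsT2 : s ≤ T/2 := hss.trans (min_le_right _ _)
  have hsδ : s ≤ δ/2 := hss.trans (min_le_left _ _)
  have hsT : s ≤ T := by linarith
  -- lower bound ψw r w ≥ 1/2 on [0, s]
  have hlow : ∀ r ∈ Icc (0:ℝ) s, (1:ℝ)/2 ≤ ψw r w := by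
    intro r hr
    have hd : dist ((r, w) : ℝ × ℝ) (0, w) < δ := by
      rw [Prod.dist_eq]
      simp only [dist_self, Real.dist_eq, sub_zero]
      rw [max_eq_left (abs_nonneg r)]
      rw [abs_of_nonneg hr.1]; linarith [hr.2]
    exact le_of_lt (hδ hd ⟨⟨hr.1, hr.2.trans hsT⟩, hw⟩)
  -- continuity of slices
  have hslice : ∀ x ∈ U, ContinuousOn (fun r => ψ r x) (Icc 0 T) := by
    intro x hx
    exact hcont.comp ((continuous_id.prodMk continuous_const).continuousOn :
      ContinuousOn (fun r : ℝ => (r, x)) (Icc 0 T)) (fun r hr => ⟨hr, hx⟩)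
  have hslicew : ∀ x ∈ U, ContinuousOn (fun r => ψw r x) (Icc 0 T) := by
    intro x hx
    exact hwcont.comp ((continuous_id.prodMk continuous_const).continuousOn :
      ContinuousOn (fun r : ℝ => (r, x)) (Icc 0 T)) (fun r hr => ⟨hr, hx⟩)
  have hsubIcc : Icc (0:ℝ) s ⊆ Icc 0 T := Icc_subset_Icc le_rfl hsT
  have hsubuIcc : uIcc (0:ℝ) s ⊆ Icc 0 T := by rw [uIcc_of_le hs0.le]; exact hsubIcc
  have hIntw : IntervalIntegrable (fun r => ψw r w) volume 0 s :=
    ((hslicew w hw).mono hsubuIcc).intervalIntegrable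
  set Dw : ℝ := ∫ r in (0:ℝ)..s, ψw r w with hDwdef
  have hDw_ge : s/2 ≤ Dw := by
    have h := intervalIntegral.integral_mono_on hs0.le
      (_root_.intervalIntegrable_const (c := (1:ℝ)/2)) hIntw hlow
    simp at h; rw [hDwdef]; linarith
  have hDw_pos : 0 < Dw := lt_of_lt_of_le (by linarith) hDw_ge
  have hMs : (1 / s) * Dw ≠ 0 := by positivity
  refine ⟨hMs, ?_⟩
  -- ball inside U
  obtain ⟨ε, hεpos, hεU⟩ := Metric.mem_nhds_iff.1 (hU.mem_nhds hw)
  have hball : Metric.closedBall w (ε/2) ⊆ U :=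
    (Metric.closedBall_subset_ball (by linarith)).trans hεU
  -- bound on ψw on compact set
  obtain ⟨C₁, hC₁⟩ := (isCompact_Icc.prod (isCompact_closedBall w (ε/2))).exists_bound_of_continuousOn
    (hwcont.mono (Set.prod_mono hsubIcc hball) : ContinuousOn _ (Icc (0:ℝ) s ×ˢ Metric.closedBall w (ε/2)))
  -- derivative of G at w
  have hG : HasDerivAt (fun x => ∫ r in (0:ℝ)..s, ψ r x) Dw w := by
    have hIoc : Set.uIoc (0:ℝ) s ⊆ Icc 0 T := by
      rw [uIoc_of_le hs0.le]; exact (Ioc_subset_Icc_self).trans hsubIcc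
    have := (intervalIntegral.hasDerivAt_integral_of_dominated_loc_of_deriv_le
      (F := fun x r => ψ r x) (F' := fun x r => ψw r x) (x₀ := w) (a := 0) (b := s)
      (bound := fun _ => C₁) (μ := volume) (s := Metric.ball w (ε/2))
      (Metric.ball_mem_nhds w (half_pos hεpos))
      ?_ ?_ ?_ ?_ ?_ ?_).2
    · exact this
    · filter_upwards [hU.mem_nhds hw] with x hx
      exact (((hslice x hx).mono hIoc).aestronglyMeasurable measurableSet_uIoc)
    · exact ((hslice w hw).mono hsubuIcc).intervalIntegrable
    · exact ((hslicew w hw).mono hIoc).aestronglyMeasurable measurableSet_uIoc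
    · refine Eventually.of_forall fun r hr x hx => ?_
      have hr' : r ∈ Icc (0:ℝ) s := by
        rw [uIoc_of_le hs0.le] at hr; exact Ioc_subset_Icc_self hr
      exact hC₁ (r, x) ⟨hr', Metric.ball_subset_closedBall hx⟩
    · exact _root_.intervalIntegrable_const
    · refine Eventually.of_forall fun r hr x hx => ?_
      have hr' : r ∈ Icc (0:ℝ) T := hIoc hr
      exact hdiff r hr' x (hεU (Metric.ball_subset_ball (by linarith) hx))
  set G : ℝ → ℝ := fun x => ∫ r in (0:ℝ)..s, ψ r x with hGdef
  -- extended function c and its primitive Φ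
  set proj : ℝ → ℝ := fun r => max 0 (min r T) with hprojdef
  have hproj_mem : ∀ r, proj r ∈ Icc (0:ℝ) T :=
    fun r => ⟨le_max_left _ _, max_le hT.le (min_le_right r T)⟩
  have hproj_id : ∀ r ∈ Icc (0:ℝ) T, proj r = r := by
    intro r hr
    simp only [hprojdef]
    rw [min_eq_left hr.2, max_eq_right hr.1]
  set c : ℝ → ℝ := fun r => ψ (proj r) w with hcdef
  have hc_cont : Continuous c := by
    rw [← continuousOn_univ]
    have hpc : Continuous fun r : ℝ => (proj r, w) := by
      refine Continuous.prodMk ?_ continuous_const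
      exact continuous_const.max (continuous_id.min continuous_const)
    exact hcont.comp hpc.continuousOn (fun r _ => ⟨hproj_mem r, hw⟩)
  have hc_eq : ∀ r ∈ Icc (0:ℝ) T, c r = ψ r w := fun r hr => by
    simp only [hcdef, hproj_id r hr]
  have hc0 : c 0 = w := by rw [hc_eq 0 h0T, hid w hw]
  obtain ⟨C, hC⟩ := isCompact_Icc.exists_bound_of_continuousOn (hslice w hw)
  have hCc : ∀ r, |c r| ≤ C := fun r => hC (proj r) (hproj_mem r)
  set Φ : ℝ → ℝ := fun u => ∫ r in (0:ℝ)..u, c r with hΦdef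
  have hΦd : ∀ u : ℝ, HasDerivAt Φ (c u) u := fun u =>
    intervalIntegral.integral_hasDerivAt_right (hc_cont.intervalIntegrable (μ := volume) 0 u)
      (hc_cont.stronglyMeasurable.stronglyMeasurableAtFilter) hc_cont.continuousAt
  have hGw : G w = Φ s := by
    refine intervalIntegral.integral_congr fun r hr => ?_
    rw [uIcc_of_le hs0.le] at hr
    exact (hc_eq r (hsubIcc hr)).symm
  -- key flow identity
  have key : ∀ t : ℝ, 0 < t → t ≤ T/2 → G (ψ t w) = Φ (t + s) - Φ t := by
    intro t ht htT
    have h1 : ∀ r ∈ uIcc (0:ℝ) s, ψ r (ψ t w) = c (t + r) := by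
      intro r hr
      rw [uIcc_of_le hs0.le] at hr
      rw [← hflow w hw r t hr.1 ht.le (by linarith [hr.2]),
        hc_eq (t + r) ⟨by linarith [hr.1], by linarith [hr.2]⟩]
    show (∫ r in (0:ℝ)..s, ψ r (ψ t w)) = Φ (t + s) - Φ t
    rw [intervalIntegral.integral_congr h1]
    rw [intervalIntegral.integral_comp_add_left c t, add_zero]
    have hadd := intervalIntegral.integral_add_adjacent_intervals
      (hc_cont.intervalIntegrable (μ := volume) 0 t) (hc_cont.intervalIntegrable (μ := volume) t (t + s))
    simp only [hΦdef]
    linarith [hadd]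
  -- tendsto of ψ t w to w
  have hmemIoo : Ioo (0:ℝ) (T/2) ∈ 𝓝[>] (0:ℝ) :=
    Ioo_mem_nhdsGT (by linarith)
  have hψt : Tendsto (fun t => ψ t w) (𝓝[>] (0:ℝ)) (𝓝 w) := by
    have h1 : Tendsto c (𝓝[>] (0:ℝ)) (𝓝 w) := by
      have := hc_cont.continuousAt (x := 0)
      rw [ContinuousAt, hc0] at this
      exact this.mono_left nhdsWithin_le_nhds
    refine h1.congr' ?_
    filter_upwards [hmemIoo] with t ht
    exact hc_eq t ⟨ht.1.le, by linarith [ht.2]⟩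
  -- A(t) → ψ s w - w
  have hA : Tendsto (fun t => (G (ψ t w) - G w) / t) (𝓝[>] (0:ℝ)) (𝓝 (ψ s w - w)) := by
    have hslope1 : Tendsto (fun t => (Φ (t + s) - Φ s) / t) (𝓝[>] (0:ℝ)) (𝓝 (ψ s w)) := by
      have hd : HasDerivAt (fun t => Φ (t + s)) (c s) 0 := by
        have h2 : HasDerivAt Φ (c s) (id (0:ℝ) + s) := by simpa using hΦd s
        have := h2.comp 0 ((hasDerivAt_id (0:ℝ)).add_const s)
        rw [mul_one] at this; exact this
      have := hasDerivAt_iff_tendsto_slope.1 hd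
      have h2 := this.mono_left (nhdsWithin_mono 0 (fun x hx => ne_of_gt hx : Ioi (0:ℝ) ⊆ {(0:ℝ)}ᶜ))
      rw [hc_eq s ⟨hs0.le, hsT⟩] at h2
      refine h2.congr fun t => ?_
      simp [slope_def_field]
    have hslope2 : Tendsto (fun t => Φ t / t) (𝓝[>] (0:ℝ)) (𝓝 w) := by
      have := hasDerivAt_iff_tendsto_slope.1 (hΦd 0)
      have h2 := this.mono_left (nhdsWithin_mono 0 (fun x hx => ne_of_gt hx : Ioi (0:ℝ) ⊆ {(0:ℝ)}ᶜ))
      rw [hc0] at h2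
      refine h2.congr fun t => ?_
      have : Φ 0 = 0 := intervalIntegral.integral_same
      simp [slope_def_field, this, div_eq_inv_mul]
    have := hslope1.sub hslope2
    refine this.congr' ?_
    filter_upwards [hmemIoo] with t ht
    rw [key t ht.1 ht.2.le, hGw]
    have htne : t ≠ 0 := ne_of_gt ht.1
    field_simp
    ring
  -- little-o estimate
  have hlo : (fun x => G x - G w - (x - w) * Dw) =o[𝓝 w] fun x => x - w := by
    have := hasDerivAt_iff_isLittleO.1 hG
    simpa [smul_eq_mul] using this
  have hcomp : (fun t => G (ψ t w) - G w - (ψ t w - w) * Dw) =o[𝓝[>] (0:ℝ)]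
      fun t => ψ t w - w := hlo.comp_tendsto hψt
  -- big-O : ψ t w - w = O(t)
  have hGb : ∀ t : ℝ, 0 < t → t ≤ T/2 → |G (ψ t w) - G w| ≤ 2 * C * t := by
    intro t ht htT
    rw [key t ht htT, hGw]
    have hadd := intervalIntegral.integral_add_adjacent_intervals
      (hc_cont.intervalIntegrable (μ := volume) 0 s) (hc_cont.intervalIntegrable (μ := volume) s (s + t))
    have heq : Φ (t + s) - Φ t - Φ s = (∫ r in s..(s+t), c r) - Φ t := by
      simp only [hΦdef]
      rw [add_comm t s]
      linarith [hadd]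
    rw [heq]
    have h1 : |∫ r in s..(s+t), c r| ≤ C * |s + t - s| := by
      have := intervalIntegral.norm_integral_le_of_norm_le_const (a := s) (b := s + t)
        (C := C) (f := c) (fun x _ => by simpa [Real.norm_eq_abs] using hCc x)
      simpa [Real.norm_eq_abs] using this
    have h2 : |Φ t| ≤ C * |t - 0| := by
      have := intervalIntegral.norm_integral_le_of_norm_le_const (a := 0) (b := t)
        (C := C) (f := c) (fun x _ => by simpa [Real.norm_eq_abs] using hCc x)
      simpa [Real.norm_eq_abs, hΦdef] using this
    rw [show s + t - s = t by ring, abs_of_pos ht] at h1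
    rw [sub_zero, abs_of_pos ht] at h2
    calc |(∫ r in s..(s+t), c r) - Φ t| ≤ |∫ r in s..(s+t), c r| + |Φ t| := abs_sub _ _
      _ ≤ C * t + C * t := add_le_add h1 h2
      _ = 2 * C * t := by ring
  have hBO : (fun t => ψ t w - w) =O[𝓝[>] (0:ℝ)] fun t => t := by
    have hsmall := hcomp.def (half_pos hDw_pos)
    rw [Asymptotics.isBigO_iff]
    refine ⟨4 * C / Dw, ?_⟩
    filter_upwards [hmemIoo, hsmall] with t ht hst
    have h1 : |G (ψ t w) - G w| ≤ 2 * C * t := hGb t ht.1 ht.2.le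
    have h2 : ‖G (ψ t w) - G w - (ψ t w - w) * Dw‖ ≤ Dw / 2 * ‖ψ t w - w‖ := hst
    simp only [Real.norm_eq_abs] at h2 ⊢
    have h3 : |ψ t w - w| * Dw = |(ψ t w - w) * Dw| := by
      rw [abs_mul, abs_of_pos hDw_pos]
    have h4 : |(ψ t w - w) * Dw| ≤ |G (ψ t w) - G w| + Dw / 2 * |ψ t w - w| := by
      calc |(ψ t w - w) * Dw| = |(G (ψ t w) - G w - (ψ t w - w) * Dw) - (G (ψ t w) - G w)| := by
            rw [← abs_neg]; congr 1; ring
        _ ≤ |G (ψ t w) - G w - (ψ t w - w) * Dw| + |G (ψ t w) - G w| := abs_sub _ _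
        _ ≤ Dw / 2 * |ψ t w - w| + |G (ψ t w) - G w| := by linarith
        _ = |G (ψ t w) - G w| + Dw / 2 * |ψ t w - w| := by ring
    have h5 : Dw / 2 * |ψ t w - w| ≤ 2 * C * t := by
      rw [← h3] at h4; nlinarith
    have hC0 : 0 ≤ C := le_trans (abs_nonneg _) (hCc 0)
    rw [abs_of_pos ht.1]
    rw [div_mul_eq_mul_div, le_div_iff₀ hDw_pos]
    nlinarith
  have hEo : (fun t => G (ψ t w) - G w - (ψ t w - w) * Dw) =o[𝓝[>] (0:ℝ)] fun t => t :=
    hcomp.trans_isBigO hBO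
  have hE : Tendsto (fun t => (G (ψ t w) - G w - (ψ t w - w) * Dw) / t) (𝓝[>] (0:ℝ)) (𝓝 0) :=
    hEo.tendsto_div_nhds_zero
  -- combine
  have hfinal : Tendsto (fun t => (ψ t w - w) / t) (𝓝[>] (0:ℝ)) (𝓝 ((ψ s w - w) * Dw⁻¹)) := by
    have h1 := (hA.sub hE).mul (tendsto_const_nhds (x := Dw⁻¹))
    rw [sub_zero] at h1
    refine h1.congr' ?_
    filter_upwards [hmemIoo] with t ht
    have htne : t ≠ 0 := ne_of_gt ht.1
    field_simp
    ring
  have heqval : (ψ s w - w) * Dw⁻¹ = ((ψ s w - w) / s) * ((1 / s) * Dw)⁻¹ := by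
    have hsne : s ≠ 0 := ne_of_gt hs0
    have hDne : Dw ≠ 0 := ne_of_gt hDw_pos
    field_simp
  rw [← heqval]
  exact hfinal
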